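/- Let n ≥ 1 and E > n. There is a constant C = C(n,E) such that for all 0 < R' ≤ R, writing B_R and B_{R'} for the cubes centered at the origin in ℝⁿ of side lengths R and R' respectively, one has the pointwise convolution bound ( w_{B_R,E} * ( (R')^{−n} w_{B_{R'},E} ) )(x) = ∫_{ℝⁿ} w_{B_R,E}(x − y) (R')^{−n} w_{B_{R'},E}(y) dy ≤ C w_{B_R,E}(x) for all x ∈ ℝⁿ; C is independent of R and R'. -/

import Mathlib

open MeasureTheory Real Filter Finset
open scoped ENNReal

noncomputable section

/-- Points of `ℝ^k`, with the Euclidean norm. -/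
abbrev Pt (k : ℕ) := EuclideanSpace ℝ (Fin k)

/-- The axis-parallel cube with center `c` and side length `R`. -/
def cube {k : ℕ} (c : Fin k → ℝ) (R : ℝ) : Set (Pt k) :=
  {x | ∀ i, |x i - c i| ≤ R / 2}

/-- The weight `w_{B,E}` associated with the cube `B` with center `c` and side length `R`:
`w_{B,E}(x) = (1 + |x - c|/R)^{-E}`. -/
def wt {k : ℕ} (c : Fin k → ℝ) (R Ew : ℝ) (x : Pt k) : ℝ :=
  (1 + Real.sqrt (∑ i, (x i - c i) ^ 2) / R) ^ (-Ew)

/-- Center of the subcube indexed by `j` in the partition of the cube with center `c` and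
side length `L` into `N^k` congruent subcubes of side length `L/N`. -/
def subCtr {k : ℕ} (c : Fin k → ℝ) (L : ℝ) {N : ℕ} (j : Fin k → Fin N) : Fin k → ℝ :=
  fun i => c i - L / 2 + (L / N) * ((j i : ℝ) + 1 / 2)

/-- The center of the unit cube `[0,1]^k`. -/
def unitCtr (k : ℕ) : Fin k → ℝ := fun _ => 1 / 2

/-- The extension operator `E_Q g` associated with the truncated paraboloid;
here the frequency variable lives in `ℝ^d` and the spatial variable in `ℝ^{d+1}`
(so `n = d + 1` in the notation of the paper). -/
def extOp {d : ℕ} (Q : Set (Pt d)) (g : Pt d → ℂ) (x : Pt (d + 1)) : ℂ :=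
  ∫ ξ in Q, g ξ * Complex.exp (2 * Real.pi * Complex.I *
    ((∑ i : Fin d, (ξ i : ℂ) * (x i.castSucc : ℂ)) +
     (∑ i : Fin d, (ξ i : ℂ) ^ 2) * (x (Fin.last d) : ℂ)))

/-- The weighted norm `‖f‖_{L^p(v)} = (∫ |f|^p v)^{1/p}`. -/
def wLp {k : ℕ} (p : ℝ) (v : Pt k → ℝ) (f : Pt k → ℂ) : ℝ :=
  (∫ x, ‖f x‖ ^ p * v x) ^ (1 / p)

/-- The normalized weighted norm `‖f‖_{L^p_♯(v)} = (|B|⁻¹ ∫ |f|^p v)^{1/p}`,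
where `vol` is the volume `|B|` of the relevant cube. -/
def wLpS {k : ℕ} (p vol : ℝ) (v : Pt k → ℝ) (f : Pt k → ℂ) : ℝ :=
  (vol⁻¹ * ∫ x, ‖f x‖ ^ p * v x) ^ (1 / p)

/-- The decoupling constant `𝒟_n(δ, p, E)` with `n = d + 1` and `δ = 4^{-k}`:
the smallest nonnegative constant `D` such that
`‖E_{[0,1]^{n-1}} g‖_{L^p(w_{B,E})} ≤ D (∑_{Q ∈ Part_{δ^{1/2}}} ‖E_Q g‖²_{L^p(w_{B,E})})^{1/2}`
for every cube `B` of side `δ⁻¹` and every integrable `g`. -/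
def decC (d : ℕ) (p Ew : ℝ) (k : ℕ) : ℝ :=
  sInf {D : ℝ | 0 ≤ D ∧
    ∀ (cB : Fin (d + 1) → ℝ) (g : Pt d → ℂ),
      IntegrableOn g (cube (unitCtr d) 1) →
      wLp p (wt cB ((4 : ℝ) ^ k) Ew) (extOp (cube (unitCtr d) 1) g) ≤
        D * (∑ j : Fin d → Fin (2 ^ k),
          wLp p (wt cB ((4 : ℝ) ^ k) Ew)
            (extOp (cube (subCtr (unitCtr d) 1 j) (((2 : ℝ) ^ k)⁻¹)) g) ^ 2) ^ ((1 : ℝ) / 2)}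

/-- The upward unit normal of the paraboloid `{(ξ, |ξ|²)}` at the point above `ξ`. -/
def unitNormal {d : ℕ} (ξ : Pt d) : Fin (d + 1) → ℝ := fun i =>
  (Real.sqrt (1 + 4 * ∑ j, ξ j ^ 2))⁻¹ *
    (if h : (i : ℕ) < d then -2 * ξ ⟨(i : ℕ), h⟩ else 1)

/-- `ν`-transversality of the cubes with centers `Qc i` and side lengths `s i`:
the volume of the parallelepiped spanned by unit normals at points of the paraboloid lying
above the cubes is at least `ν`. -/
def transverse {d : ℕ} (ν : ℝ) (Qc : Fin (d + 1) → Fin d → ℝ) (s : Fin (d + 1) → ℝ) : Prop :=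
  ∀ P : Fin (d + 1) → Pt d, (∀ i, P i ∈ cube (Qc i) (s i)) →
    ν ≤ |Matrix.det (Matrix.of fun i j => unitNormal (P i) j)|

/-- The multilinear decoupling constant `𝒟_n(δ, p, ν, m, E)`, with `n = d + 1`, `δ = 4^{-k}`,
and transverse cubes of common side length `μ = 2^{-a} ≥ δ^{2^{-m}}`. -/
def decCM (d : ℕ) (p Ew ν : ℝ) (m k : ℕ) : ℝ :=
  sInf {D : ℝ | 0 ≤ D ∧
    ∀ a : ℕ, a ≤ k → a * 2 ^ m ≤ 2 * k →
    ∀ Qc : Fin (d + 1) → Fin d → ℝ,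
      (∀ i, cube (Qc i) (((2 : ℝ) ^ a)⁻¹) ⊆ cube (unitCtr d) 1) →
      transverse ν Qc (fun _ => ((2 : ℝ) ^ a)⁻¹) →
    ∀ (cB : Fin (d + 1) → ℝ) (g : Pt d → ℂ),
      IntegrableOn g (cube (unitCtr d) 1) →
      (∑ J : Fin (d + 1) → Fin (2 ^ (2 * k - a)),
        (∏ i, wLp p (wt (subCtr cB ((4 : ℝ) ^ k) J) ((2 : ℝ) ^ a) (10 * Ew))
            (extOp (cube (Qc i) (((2 : ℝ) ^ a)⁻¹)) g) ^ p) ^ ((1 : ℝ) / (d + 1))) ^ (1 / p) ≤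
      D * (∏ i, ∑ j : Fin d → Fin (2 ^ (k - a)),
        wLp p (wt cB ((4 : ℝ) ^ k) Ew)
          (extOp (cube (subCtr (Qc i) (((2 : ℝ) ^ a)⁻¹) j) (((2 : ℝ) ^ k)⁻¹)) g) ^ 2)
        ^ ((1 : ℝ) / (2 * (d + 1)))}

/-- The quantity `D_t(q, B^r, g)` from the iteration scheme; `δ = 4^{-k}`, the cubes `Q_i`
have centers `Qc i` and side lengths `2^{-a i}`, and `B^r` has center `cB` and side `δ^{-r}`. -/
def Dfun (d k : ℕ) (Ew t : ℝ) (Qc : Fin (d + 1) → Fin d → ℝ) (a : Fin (d + 1) → ℕ)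
    (q : ℕ) (cB : Fin (d + 1) → ℝ) (r : ℕ) (g : Pt d → ℂ) : ℝ :=
  (∏ i, (∑ j : Fin d → Fin (2 ^ (2 * k * q - a i)),
    wLpS t ((4 : ℝ) ^ (k * r * (d + 1))) (wt cB ((4 : ℝ) ^ (k * r)) Ew)
      (extOp (cube (subCtr (Qc i) (((2 : ℝ) ^ (a i))⁻¹) j) (((4 : ℝ) ^ (k * q))⁻¹)) g) ^ 2)
      ^ ((1 : ℝ) / 2)) ^ ((1 : ℝ) / (d + 1))

/-- The quantity `A_p(q, B^r, s, g)` from the iteration scheme. -/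
def Afun (d k : ℕ) (Ew p : ℝ) (Qc : Fin (d + 1) → Fin d → ℝ) (a : Fin (d + 1) → ℕ)
    (q s r : ℕ) (cB : Fin (d + 1) → ℝ) (g : Pt d → ℂ) : ℝ :=
  (((4 : ℝ) ^ (k * (r - s) * (d + 1)))⁻¹ *
    ∑ J : Fin (d + 1) → Fin (4 ^ (k * (r - s))),
      Dfun d k Ew 2 Qc a q (subCtr cB ((4 : ℝ) ^ (k * r)) J) s g ^ p) ^ (1 / p)

/-- `κ_p`, with `n = d + 1`. -/
def kappa (d : ℕ) (p : ℝ) : ℝ :=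
  if p ≤ 2 * (d + 1) / d then 0 else (p * (d + 1) - p - 2 * (d + 1)) / ((p - 2) * d)

/-- The `δ`-neighborhood `N_δ(Q)` of the piece of the paraboloid lying above `Q`. -/
def parabRegion {d : ℕ} (Q : Set (Pt d)) (δ : ℝ) : Set (Pt (d + 1)) :=
  {y | ∃ ξ : Pt d, ξ ∈ Q ∧ (∀ i : Fin d, y i.castSucc = ξ i) ∧
    ∃ t : ℝ, 0 ≤ t ∧ t ≤ δ ∧ y (Fin.last d) = (∑ i, ξ i ^ 2) + t}

/-- A tile: the rectangular box centered at `a` with orthonormal frame `u`, having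
side length `R` in the direction `u iLong` and side lengths `√R` in the remaining
`n - 1` orthogonal directions. -/
def tile {n : ℕ} (a : Pt n) (u : Fin n → Pt n) (R : ℝ) (iLong : Fin n) : Set (Pt n) :=
  {x | (∀ i, i ≠ iLong → |(inner ℝ (x - a) (u i) : ℝ)| ≤ Real.sqrt R / 2) ∧
    |(inner ℝ (x - a) (u iLong) : ℝ)| ≤ R / 2}

end

section Statement18Aux

open MeasureTheory

lemma wt_zero_eq {n : ℕ} (R Ew : ℝ) (x : Pt n) :
    wt (fun _ => 0) R Ew x = (1 + ‖x‖ / R) ^ (-Ew) := by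
  unfold wt
  rw [EuclideanSpace.norm_eq]
  simp [Real.norm_eq_abs, sq_abs]

lemma aux_cont {n : ℕ} (R Ew : ℝ) (hR : 0 < R) :
    Continuous (fun y : Pt n => (1 + ‖y‖ / R) ^ (-Ew)) := by
  apply Continuous.rpow_const
  · exact continuous_const.add (continuous_norm.div_const R)
  · intro y
    left
    positivity

lemma aux_integrable {n : ℕ} {Ew : ℝ} (hE : (n : ℝ) < Ew) {R : ℝ} (hR : 0 < R) :
    Integrable (fun y : Pt n => (1 + ‖y‖ / R) ^ (-Ew)) := by
  have h0 : Integrable (fun y : Pt n => (1 + ‖y‖) ^ (-Ew)) :=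
    integrable_one_add_norm (by rwa [finrank_euclideanSpace_fin])
  have heq : (fun y : Pt n => (1 + ‖y‖ / R) ^ (-Ew))
      = fun y : Pt n => (1 + ‖R⁻¹ • y‖) ^ (-Ew) := by
    funext y
    rw [norm_smul, Real.norm_eq_abs, abs_of_pos (inv_pos.2 hR), inv_mul_eq_div]
  rw [heq]
  exact (integrable_comp_smul_iff volume (fun y : Pt n => (1 + ‖y‖) ^ (-Ew))
    (inv_ne_zero hR.ne')).2 h0

lemma aux_integral_eq {n : ℕ} (Ew : ℝ) {R : ℝ} (hR : 0 < R) :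
    ∫ y : Pt n, (1 + ‖y‖ / R) ^ (-Ew) = R ^ n * ∫ y : Pt n, (1 + ‖y‖) ^ (-Ew) := by
  have heq : (fun y : Pt n => (1 + ‖y‖ / R) ^ (-Ew))
      = fun y : Pt n => (1 + ‖R⁻¹ • y‖) ^ (-Ew) := by
    funext y
    rw [norm_smul, Real.norm_eq_abs, abs_of_pos (inv_pos.2 hR), inv_mul_eq_div]
  calc ∫ y : Pt n, (1 + ‖y‖ / R) ^ (-Ew)
      = ∫ y : Pt n, (1 + ‖R⁻¹ • y‖) ^ (-Ew) := by rw [heq]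
    _ = R ^ Module.finrank ℝ (Pt n) • ∫ y : Pt n, (1 + ‖y‖) ^ (-Ew) :=
        Measure.integral_comp_inv_smul_of_nonneg volume
          (fun y : Pt n => (1 + ‖y‖) ^ (-Ew)) hR.le
    _ = R ^ n * ∫ y : Pt n, (1 + ‖y‖) ^ (-Ew) := by
        rw [finrank_euclideanSpace_fin, smul_eq_mul]

lemma aux_caseA {n : ℕ} {R Ew : ℝ} (hR : 0 < R) (hE : 0 < Ew) (x y : Pt n)
    (hy : ‖y‖ ≤ (R + ‖x‖) / 2) :
    (1 + ‖x - y‖ / R) ^ (-Ew) ≤ 2 ^ Ew * (1 + ‖x‖ / R) ^ (-Ew) := by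
  have hb : (1 + ‖x‖ / R) / 2 ≤ 1 + ‖x - y‖ / R := by
    rcases le_total ‖x‖ R with h | h
    · have h1 : ‖x‖ / R ≤ 1 := div_le_one_of_le₀ h hR.le
      have h2 : (0 : ℝ) ≤ ‖x - y‖ / R := by positivity
      linarith
    · have h1 : ‖x‖ - ‖y‖ ≤ ‖x - y‖ := norm_sub_norm_le x y
      have h2 : (‖x‖ - R) / 2 ≤ ‖x - y‖ := by linarith
      have h3 : (1 + ‖x‖ / R) / 2 = 1 + ((‖x‖ - R) / 2) / R := by
        field_simp
        ring
      rw [h3]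
      gcongr
  calc (1 + ‖x - y‖ / R) ^ (-Ew)
      ≤ ((1 + ‖x‖ / R) / 2) ^ (-Ew) :=
        Real.rpow_le_rpow_of_nonpos (by positivity) hb (neg_nonpos.2 hE.le)
    _ = 2 ^ Ew * (1 + ‖x‖ / R) ^ (-Ew) := by
        rw [Real.div_rpow (by positivity) (by norm_num),
          Real.rpow_neg (by norm_num : (0:ℝ) ≤ 2), div_eq_mul_inv, inv_inv, mul_comm]

lemma aux_caseB {n : ℕ} {R R' Ew : ℝ} (hR' : 0 < R') (hRR : R' ≤ R) (hE : 0 < Ew)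
    (x y : Pt n) (hy : (R + ‖x‖) / 2 ≤ ‖y‖) :
    (1 + ‖y‖ / R') ^ (-Ew) ≤ 2 ^ Ew * (R' / R) ^ Ew * (1 + ‖x‖ / R) ^ (-Ew) := by
  have hR : 0 < R := hR'.trans_le hRR
  have hb : (R / (2 * R')) * (1 + ‖x‖ / R) ≤ 1 + ‖y‖ / R' := by
    have h1 : (R / (2 * R')) * (1 + ‖x‖ / R) = ((R + ‖x‖) / 2) / R' := by
      field_simp
    rw [h1]
    have h3 : ((R + ‖x‖) / 2) / R' ≤ ‖y‖ / R' := by gcongr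
    have h4 : ‖y‖ / R' ≤ 1 + ‖y‖ / R' := by linarith
    linarith
  calc (1 + ‖y‖ / R') ^ (-Ew)
      ≤ ((R / (2 * R')) * (1 + ‖x‖ / R)) ^ (-Ew) :=
        Real.rpow_le_rpow_of_nonpos (by positivity) hb (neg_nonpos.2 hE.le)
    _ = (R / (2 * R')) ^ (-Ew) * (1 + ‖x‖ / R) ^ (-Ew) :=
        Real.mul_rpow (by positivity) (by positivity)
    _ = 2 ^ Ew * (R' / R) ^ Ew * (1 + ‖x‖ / R) ^ (-Ew) := by
        congr 1
        have hinv : (R / (2 * R'))⁻¹ = 2 * (R' / R) := by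
          field_simp
        rw [Real.rpow_neg (by positivity), ← Real.inv_rpow (by positivity), hinv,
          Real.mul_rpow (by norm_num) (by positivity)]

end Statement18Aux

/-- the convolution inequality
`w_{B_R,E} * ((R')^{-n} w_{B_{R'},E}) ≲ w_{B_R,E}` for `0 < R' ≤ R`, cubes centered at
the origin. -/
theorem statement18 (n : ℕ) (hn : 1 ≤ n) (Ew : ℝ) (hE : (n : ℝ) < Ew) :
    ∃ C : ℝ, 0 < C ∧ ∀ R R' : ℝ, 0 < R' → R' ≤ R → ∀ x : Pt n,
      (∫ y : Pt n, wt (fun _ => 0) R Ew (x - y) * ((R' ^ n)⁻¹ * wt (fun _ => 0) R' Ew y)) ≤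
        C * wt (fun _ => 0) R Ew x := by
  classical
  open MeasureTheory in
  have hn' : (0 : ℝ) < n := by exact_mod_cast hn
  have hE0 : 0 < Ew := hn'.trans hE
  set I : ℝ := ∫ y : Pt n, (1 + ‖y‖) ^ (-Ew) with hIdef
  have hI0 : 0 ≤ I := integral_nonneg fun y => Real.rpow_nonneg (by positivity) _
  refine ⟨2 ^ (Ew + 1) * I + 1, by positivity, ?_⟩
  intro R R' hR' hRR x
  have hR : 0 < R := hR'.trans_le hRR
  simp only [wt_zero_eq]
  -- notation
  have hRn' : ((R' ^ n : ℝ)) ≠ 0 := by positivity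
  set wx : ℝ := (1 + ‖x‖ / R) ^ (-Ew) with hwx
  have hwx0 : 0 ≤ wx := Real.rpow_nonneg (by positivity) _
  have hwR'nonneg : ∀ y : Pt n, (0:ℝ) ≤ (1 + ‖y‖ / R') ^ (-Ew) := fun y =>
    Real.rpow_nonneg (by positivity) _
  have hIntR : Integrable (fun y : Pt n => (1 + ‖y‖ / R) ^ (-Ew)) := aux_integrable hE hR
  have hIntR' : Integrable (fun y : Pt n => (1 + ‖y‖ / R') ^ (-Ew)) := aux_integrable hE hR'
  have hIntShift : Integrable (fun y : Pt n => (1 + ‖x - y‖ / R) ^ (-Ew)) :=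
    hIntR.comp_sub_left x
  have hValShift : ∫ y : Pt n, (1 + ‖x - y‖ / R) ^ (-Ew) = R ^ n * I := by
    rw [integral_sub_left_eq_self (fun z : Pt n => (1 + ‖z‖ / R) ^ (-Ew)) volume x]
    exact aux_integral_eq Ew hR
  -- the integrand and its integrability
  have hf_nonneg : ∀ y : Pt n,
      (0:ℝ) ≤ (1 + ‖x - y‖ / R) ^ (-Ew) * ((R' ^ n)⁻¹ * (1 + ‖y‖ / R') ^ (-Ew)) := by
    intro y
    have := Real.rpow_nonneg (show (0:ℝ) ≤ 1 + ‖x - y‖ / R by positivity) (-Ew)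
    positivity
  have hfInt : Integrable (fun y : Pt n =>
      (1 + ‖x - y‖ / R) ^ (-Ew) * ((R' ^ n)⁻¹ * (1 + ‖y‖ / R') ^ (-Ew))) := by
    refine (hIntR'.const_mul ((R' ^ n)⁻¹)).mono' ?_ ?_
    · exact ((((aux_cont R Ew hR).comp (continuous_const.sub continuous_id)).mul
        (continuous_const.mul (aux_cont R' Ew hR')))).aestronglyMeasurable
    · filter_upwards with y
      rw [Real.norm_eq_abs, abs_of_nonneg (hf_nonneg y)]
      have h1 : (1 + ‖x - y‖ / R) ^ (-Ew) ≤ 1 :=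
        Real.rpow_le_one_of_one_le_of_nonpos (le_add_of_nonneg_right (by positivity))
          (neg_nonpos.2 hE0.le)
      have h2 : (0:ℝ) ≤ (R' ^ n)⁻¹ * (1 + ‖y‖ / R') ^ (-Ew) := by
        have := hwR'nonneg y
        positivity
      exact mul_le_of_le_one_left h2 h1
  -- split into near and far regions
  set A : Set (Pt n) := Metric.closedBall (0 : Pt n) ((R + ‖x‖) / 2) with hA
  have hAmeas : MeasurableSet A := measurableSet_closedBall
  have hsplit : (∫ y : Pt n, (1 + ‖x - y‖ / R) ^ (-Ew) * ((R' ^ n)⁻¹ * (1 + ‖y‖ / R') ^ (-Ew)))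
      = (∫ y in A, (1 + ‖x - y‖ / R) ^ (-Ew) * ((R' ^ n)⁻¹ * (1 + ‖y‖ / R') ^ (-Ew)))
        + ∫ y in Aᶜ, (1 + ‖x - y‖ / R) ^ (-Ew) * ((R' ^ n)⁻¹ * (1 + ‖y‖ / R') ^ (-Ew)) :=
    (integral_add_compl hAmeas hfInt).symm
  -- bound on A
  have hboundA : (∫ y in A, (1 + ‖x - y‖ / R) ^ (-Ew) * ((R' ^ n)⁻¹ * (1 + ‖y‖ / R') ^ (-Ew)))
      ≤ 2 ^ Ew * wx * I := by
    have step1 : (∫ y in A, (1 + ‖x - y‖ / R) ^ (-Ew) * ((R' ^ n)⁻¹ * (1 + ‖y‖ / R') ^ (-Ew)))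
        ≤ ∫ y in A, (2 ^ Ew * wx * (R' ^ n)⁻¹) * (1 + ‖y‖ / R') ^ (-Ew) := by
      refine setIntegral_mono_on hfInt.integrableOn
        ((hIntR'.const_mul _).integrableOn) hAmeas ?_
      intro y hy
      have hy' : ‖y‖ ≤ (R + ‖x‖) / 2 := by
        simpa [A, Metric.mem_closedBall, dist_zero_right] using hy
      have h2 : (0:ℝ) ≤ (R' ^ n)⁻¹ * (1 + ‖y‖ / R') ^ (-Ew) := by
        have := hwR'nonneg y
        positivity
      calc (1 + ‖x - y‖ / R) ^ (-Ew) * ((R' ^ n)⁻¹ * (1 + ‖y‖ / R') ^ (-Ew))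
          ≤ (2 ^ Ew * wx) * ((R' ^ n)⁻¹ * (1 + ‖y‖ / R') ^ (-Ew)) :=
            mul_le_mul_of_nonneg_right (aux_caseA hR hE0 x y hy') h2
        _ = (2 ^ Ew * wx * (R' ^ n)⁻¹) * (1 + ‖y‖ / R') ^ (-Ew) := by ring
    have step2 : (∫ y in A, (2 ^ Ew * wx * (R' ^ n)⁻¹) * (1 + ‖y‖ / R') ^ (-Ew))
        ≤ (2 ^ Ew * wx * (R' ^ n)⁻¹) * (R' ^ n * I) := by
      rw [integral_const_mul]
      have hc : (0:ℝ) ≤ 2 ^ Ew * wx * (R' ^ n)⁻¹ := by positivity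
      have hle : (∫ y in A, (1 + ‖y‖ / R') ^ (-Ew)) ≤ ∫ y : Pt n, (1 + ‖y‖ / R') ^ (-Ew) :=
        setIntegral_le_integral hIntR' (Filter.Eventually.of_forall hwR'nonneg)
      rw [aux_integral_eq Ew hR'] at hle
      exact mul_le_mul_of_nonneg_left hle hc
    have step3 : (2 ^ Ew * wx * (R' ^ n)⁻¹) * (R' ^ n * I) = 2 ^ Ew * wx * I := by
      field_simp
    linarith
  -- bound on Aᶜ
  have hfac : (R' / R) ^ Ew * ((R' ^ n : ℝ))⁻¹ * R ^ n ≤ 1 := by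
    have ht : 0 < R' / R := by positivity
    have ht1 : R' / R ≤ 1 := (div_le_one hR).2 hRR
    have h1 : ((R' ^ n : ℝ))⁻¹ * R ^ n = (R' / R) ^ (-(n : ℝ)) := by
      rw [Real.rpow_neg ht.le, Real.rpow_natCast, div_pow, inv_div]
      ring
    rw [mul_assoc, h1, ← Real.rpow_add ht]
    exact Real.rpow_le_one ht.le ht1 (by linarith)
  have hboundAc : (∫ y in Aᶜ, (1 + ‖x - y‖ / R) ^ (-Ew) * ((R' ^ n)⁻¹ * (1 + ‖y‖ / R') ^ (-Ew)))
      ≤ 2 ^ Ew * wx * I := by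
    have step1 : (∫ y in Aᶜ, (1 + ‖x - y‖ / R) ^ (-Ew) * ((R' ^ n)⁻¹ * (1 + ‖y‖ / R') ^ (-Ew)))
        ≤ ∫ y in Aᶜ, (2 ^ Ew * (R' / R) ^ Ew * wx * (R' ^ n)⁻¹) * (1 + ‖x - y‖ / R) ^ (-Ew) := by
      refine setIntegral_mono_on hfInt.integrableOn
        ((hIntShift.const_mul _).integrableOn) hAmeas.compl ?_
      intro y hy
      have hy' : (R + ‖x‖) / 2 ≤ ‖y‖ := by
        have : ¬ (‖y‖ ≤ (R + ‖x‖) / 2) := by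
          simpa [A, Metric.mem_closedBall, dist_zero_right] using hy
        linarith [lt_of_not_ge this]
      have h0 : (0:ℝ) ≤ (1 + ‖x - y‖ / R) ^ (-Ew) :=
        Real.rpow_nonneg (by positivity) _
      calc (1 + ‖x - y‖ / R) ^ (-Ew) * ((R' ^ n)⁻¹ * (1 + ‖y‖ / R') ^ (-Ew))
          ≤ (1 + ‖x - y‖ / R) ^ (-Ew) * ((R' ^ n)⁻¹ * (2 ^ Ew * (R' / R) ^ Ew * wx)) := by
            refine mul_le_mul_of_nonneg_left ?_ h0
            refine mul_le_mul_of_nonneg_left ?_ (by positivity)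
            exact aux_caseB hR' hRR hE0 x y hy'
        _ = (2 ^ Ew * (R' / R) ^ Ew * wx * (R' ^ n)⁻¹) * (1 + ‖x - y‖ / R) ^ (-Ew) := by ring
    have step2 : (∫ y in Aᶜ, (2 ^ Ew * (R' / R) ^ Ew * wx * (R' ^ n)⁻¹)
          * (1 + ‖x - y‖ / R) ^ (-Ew))
        ≤ (2 ^ Ew * (R' / R) ^ Ew * wx * (R' ^ n)⁻¹) * (R ^ n * I) := by
      rw [integral_const_mul]
      have hc : (0:ℝ) ≤ 2 ^ Ew * (R' / R) ^ Ew * wx * (R' ^ n)⁻¹ := by positivity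
      have hle : (∫ y in Aᶜ, (1 + ‖x - y‖ / R) ^ (-Ew))
          ≤ ∫ y : Pt n, (1 + ‖x - y‖ / R) ^ (-Ew) :=
        setIntegral_le_integral hIntShift (Filter.Eventually.of_forall fun y =>
          Real.rpow_nonneg (by positivity) _)
      rw [hValShift] at hle
      exact mul_le_mul_of_nonneg_left hle hc
    have step3 : (2 ^ Ew * (R' / R) ^ Ew * wx * (R' ^ n)⁻¹) * (R ^ n * I)
        ≤ 2 ^ Ew * wx * I := by
      have h2 : (0:ℝ) ≤ 2 ^ Ew * wx * I := by positivity
      have heq : (2 ^ Ew * (R' / R) ^ Ew * wx * (R' ^ n)⁻¹) * (R ^ n * I)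
          = (2 ^ Ew * wx * I) * ((R' / R) ^ Ew * ((R' ^ n : ℝ))⁻¹ * R ^ n) := by ring
      rw [heq]
      calc (2 ^ Ew * wx * I) * ((R' / R) ^ Ew * ((R' ^ n : ℝ))⁻¹ * R ^ n)
          ≤ (2 ^ Ew * wx * I) * 1 := mul_le_mul_of_nonneg_left hfac h2
        _ = 2 ^ Ew * wx * I := mul_one _
    linarith
  rw [hsplit]
  have hfinal : 2 ^ Ew * wx * I + 2 ^ Ew * wx * I = (2 ^ (Ew + 1) * I) * wx := by
    rw [Real.rpow_add (by norm_num : (0:ℝ) < 2), Real.rpow_one]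
    ring
  calc (∫ y in A, (1 + ‖x - y‖ / R) ^ (-Ew) * ((R' ^ n)⁻¹ * (1 + ‖y‖ / R') ^ (-Ew)))
        + ∫ y in Aᶜ, (1 + ‖x - y‖ / R) ^ (-Ew) * ((R' ^ n)⁻¹ * (1 + ‖y‖ / R') ^ (-Ew))
      ≤ 2 ^ Ew * wx * I + 2 ^ Ew * wx * I := add_le_add hboundA hboundAc
    _ = (2 ^ (Ew + 1) * I) * wx := hfinal
    _ ≤ (2 ^ (Ew + 1) * I + 1) * wx := by nlinarith
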